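/- Let d ≥ 2 be an integer and r ≥ 1 a real number. There exists a constant C depending only on d and r such that for all 0 < ρ ≤ 1/2: ρ^r ∫₀^{1/2} s^{d−2}(ρ+s²)^{1−2r} ds + ∫₀^{1/2} s^{d+r−2}(ρ+s²)^{1−2r} ds ≤ C ρ^{(d+1)/2 − (3/2)r} if r > (d+1)/3; ≤ C(1 + |log ρ|) if r = (d+1)/3; and ≤ C if r < (d+1)/3. -/

import Mathlib

open MeasureTheory Set
noncomputable section

namespace Stmt12Aux

lemma meas_f (ρ e p : ℝ) : Measurable (fun s : ℝ => s ^ p * (ρ + s ^ 2) ^ e) := by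
  fun_prop

lemma integrableOn_f {r p ρ : ℝ} (hr : 1 ≤ r) (hp : 0 ≤ p) (hρ : 0 < ρ) :
    IntegrableOn (fun s : ℝ => s ^ p * (ρ + s ^ 2) ^ (1 - 2 * r)) (Ioc (0:ℝ) (1/2)) := by
  apply Measure.integrableOn_of_bounded (M := ρ ^ (1 - 2*r)) (by simp)
    ((meas_f _ _ _).aestronglyMeasurable)
  filter_upwards [ae_restrict_mem measurableSet_Ioc] with s hs
  obtain ⟨hs0, hs1⟩ := hs
  have h1 : s ^ p ≤ 1 := Real.rpow_le_one hs0.le (by linarith) hp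
  have h2 : (ρ + s ^ 2) ^ (1 - 2*r) ≤ ρ ^ (1 - 2*r) :=
    Real.rpow_le_rpow_of_nonpos hρ (by nlinarith) (by linarith)
  have h3 : (0:ℝ) ≤ (ρ + s^2) ^ (1-2*r) := Real.rpow_nonneg (by nlinarith) _
  rw [Real.norm_eq_abs, abs_of_nonneg (mul_nonneg (Real.rpow_nonneg hs0.le _) h3)]
  calc s ^ p * (ρ + s ^ 2) ^ (1 - 2*r) ≤ 1 * (ρ ^ (1 - 2*r)) :=
        mul_le_mul h1 h2 h3 zero_le_one
    _ = ρ ^ (1 - 2*r) := one_mul _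

lemma key (r p ρ : ℝ) (hr : 1 ≤ r) (hp : 0 ≤ p) (hρ : 0 < ρ) (hρ1 : ρ ≤ 1/2) :
    (∫ s in Ioc (0:ℝ) (1/2), s ^ p * (ρ + s ^ 2) ^ (1 - 2*r))
      ≤ ρ ^ (1 - 2*r + (p+1)/2) / (p+1)
        + ∫ s in Ioc (min (Real.sqrt ρ) (1/2)) (1/2), s ^ (p + 2 - 4*r) := by
  set t := min (Real.sqrt ρ) (1/2) with ht_def
  have ht0 : 0 < t := lt_min (Real.sqrt_pos.2 hρ) (by norm_num)
  have ht1 : t ≤ 1/2 := min_le_right _ _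
  have htρ : t ≤ Real.sqrt ρ := min_le_left _ _
  have hint : IntegrableOn (fun s : ℝ => s ^ p * (ρ + s ^ 2) ^ (1 - 2*r)) (Ioc (0:ℝ) (1/2)) :=
    integrableOn_f hr hp hρ
  have hint1 : IntegrableOn (fun s : ℝ => s ^ p * (ρ + s ^ 2) ^ (1 - 2*r)) (Ioc (0:ℝ) t) :=
    hint.mono_set (Ioc_subset_Ioc_right ht1)
  have hint2 : IntegrableOn (fun s : ℝ => s ^ p * (ρ + s ^ 2) ^ (1 - 2*r)) (Ioc t (1/2)) :=
    hint.mono_set (Ioc_subset_Ioc_left ht0.le)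
  have hsplit : (∫ s in Ioc (0:ℝ) (1/2), s ^ p * (ρ + s ^ 2) ^ (1 - 2*r))
      = (∫ s in Ioc (0:ℝ) t, s ^ p * (ρ + s ^ 2) ^ (1 - 2*r))
        + ∫ s in Ioc t (1/2), s ^ p * (ρ + s ^ 2) ^ (1 - 2*r) := by
    rw [← setIntegral_union (Ioc_disjoint_Ioc_of_le le_rfl) measurableSet_Ioc hint1 hint2,
      Ioc_union_Ioc_eq_Ioc ht0.le ht1]
  have hP : (∫ s in Ioc (0:ℝ) t, s ^ p * (ρ + s ^ 2) ^ (1 - 2*r))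
      ≤ ρ ^ (1 - 2*r + (p+1)/2) / (p+1) := by
    have hmono : (∫ s in Ioc (0:ℝ) t, s ^ p * (ρ + s ^ 2) ^ (1 - 2*r))
        ≤ ∫ s in Ioc (0:ℝ) t, ρ ^ (1 - 2*r) * s ^ p := by
      apply setIntegral_mono_on hint1
        (((intervalIntegral.intervalIntegrable_rpow' (by linarith : (-1:ℝ) < p)).1).const_mul _)
        measurableSet_Ioc
      intro s hs
      have h2 : (ρ + s ^ 2) ^ (1 - 2*r) ≤ ρ ^ (1 - 2*r) :=
        Real.rpow_le_rpow_of_nonpos hρ (by nlinarith) (by linarith)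
      calc s ^ p * (ρ + s ^ 2) ^ (1 - 2*r) ≤ s ^ p * ρ ^ (1 - 2*r) :=
            mul_le_mul_of_nonneg_left h2 (Real.rpow_nonneg hs.1.le _)
        _ = ρ ^ (1 - 2*r) * s ^ p := mul_comm _ _
    have hval : (∫ s in Ioc (0:ℝ) t, s ^ p) = t ^ (p+1) / (p+1) := by
      rw [← intervalIntegral.integral_of_le ht0.le,
        integral_rpow (Or.inl (by linarith : (-1:ℝ) < p))]
      rw [Real.zero_rpow (by linarith : p + 1 ≠ 0)]
      ring
    have hsq : (Real.sqrt ρ) ^ (p+1) = ρ ^ ((p+1)/2) := by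
      rw [Real.sqrt_eq_rpow, ← Real.rpow_mul hρ.le]
      congr 1; ring
    calc (∫ s in Ioc (0:ℝ) t, s ^ p * (ρ + s ^ 2) ^ (1 - 2*r))
        ≤ ∫ s in Ioc (0:ℝ) t, ρ ^ (1 - 2*r) * s ^ p := hmono
      _ = ρ ^ (1 - 2*r) * (t ^ (p+1) / (p+1)) := by rw [integral_const_mul, hval]
      _ ≤ ρ ^ (1 - 2*r) * ((Real.sqrt ρ) ^ (p+1) / (p+1)) := by
          apply mul_le_mul_of_nonneg_left _ (Real.rpow_nonneg hρ.le _)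
          apply div_le_div_of_nonneg_right ?_ (by linarith)
          exact Real.rpow_le_rpow ht0.le htρ (by linarith)
      _ = ρ ^ (1 - 2*r + (p+1)/2) / (p+1) := by
          rw [hsq, Real.rpow_add hρ]; ring
  have hQ : (∫ s in Ioc t (1/2), s ^ p * (ρ + s ^ 2) ^ (1 - 2*r))
      ≤ ∫ s in Ioc t (1/2), s ^ (p + 2 - 4*r) := by
    apply setIntegral_mono_on hint2
      ((intervalIntegral.intervalIntegrable_rpow
        (Or.inr (notMem_uIcc_of_lt ht0 one_half_pos))).1)
      measurableSet_Ioc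
    intro s hs
    have hs0 : 0 < s := ht0.trans hs.1
    have h2 : (ρ + s ^ 2) ^ (1 - 2*r) ≤ (s ^ 2 : ℝ) ^ (1 - 2*r) :=
      Real.rpow_le_rpow_of_nonpos (by positivity) (by linarith) (by linarith)
    have e1 : s ^ p * (s ^ 2 : ℝ) ^ (1 - 2*r) = s ^ (p + 2 - 4*r) := by
      rw [← Real.rpow_natCast s 2, ← Real.rpow_mul hs0.le, ← Real.rpow_add hs0]
      congr 1
      push_cast
      ring
    calc s ^ p * (ρ + s ^ 2) ^ (1 - 2*r) ≤ s ^ p * (s ^ 2 : ℝ) ^ (1 - 2*r) :=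
          mul_le_mul_of_nonneg_left h2 (Real.rpow_nonneg hs0.le _)
      _ = s ^ (p + 2 - 4*r) := e1
  rw [hsplit]
  exact add_le_add hP hQ

lemma master (d : ℕ) (hd : 2 ≤ d) (r : ℝ) (hr : 1 ≤ r) (ρ : ℝ) (hρ : 0 < ρ) (hρ1 : ρ ≤ 1/2) :
    ρ ^ r * (∫ s in Ioc (0:ℝ) (1/2), s ^ (d - 2) * (ρ + s ^ 2) ^ (1 - 2 * r))
      + (∫ s in Ioc (0:ℝ) (1/2), s ^ ((d:ℝ) + r - 2) * (ρ + s ^ 2) ^ (1 - 2 * r))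
    ≤ 2 * ρ ^ (((d:ℝ) + 1)/2 - 3/2 * r)
      + 2 * ∫ s in Ioc (min (Real.sqrt ρ) (1/2)) (1/2), s ^ ((d:ℝ) - 3*r) := by
  have hd2 : (2:ℝ) ≤ (d:ℝ) := by exact_mod_cast hd
  set t := min (Real.sqrt ρ) (1/2) with ht_def
  have ht0 : 0 < t := lt_min (Real.sqrt_pos.2 hρ) (by norm_num)
  have ht1 : t ≤ 1/2 := min_le_right _ _
  set E := ((d:ℝ) + 1)/2 - 3/2 * r with hE_def
  set K := ∫ s in Ioc t (1/2), s ^ ((d:ℝ) - 3*r) with hK_def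
  have hKnonneg : 0 ≤ K := by
    apply setIntegral_nonneg measurableSet_Ioc
    intro s hs
    exact Real.rpow_nonneg (ht0.trans hs.1).le _
  -- convert natural power to rpow in the first integral
  have hI1cast : (∫ s in Ioc (0:ℝ) (1/2), s ^ (d - 2) * (ρ + s ^ 2) ^ (1 - 2 * r))
      = ∫ s in Ioc (0:ℝ) (1/2), s ^ ((d:ℝ) - 2) * (ρ + s ^ 2) ^ (1 - 2 * r) := by
    have hc : ∀ s : ℝ, s ^ (d - 2) = s ^ ((d:ℝ) - 2) := by
      intro s
      rw [← Real.rpow_natCast s (d - 2), Nat.cast_sub hd]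
      norm_num
    simp_rw [hc]
  rw [hI1cast]
  -- tail comparison for the first integral
  have htail : (∫ s in Ioc t (1/2), s ^ ((d:ℝ) - 2 + 2 - 4*r))
      ≤ ρ ^ (-(r/2)) * K := by
    rw [hK_def, ← integral_const_mul]
    apply setIntegral_mono_on
      ((intervalIntegral.intervalIntegrable_rpow
        (Or.inr (notMem_uIcc_of_lt ht0 one_half_pos))).1)
      (((intervalIntegral.intervalIntegrable_rpow
        (Or.inr (notMem_uIcc_of_lt ht0 one_half_pos))).1).const_mul _)
      measurableSet_Ioc
    intro s hs
    have hs0 : 0 < s := ht0.trans hs.1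
    have hsρ : Real.sqrt ρ ≤ s := by
      rcases le_or_gt (Real.sqrt ρ) (1/2) with h | h
      · have : t = Real.sqrt ρ := min_eq_left h
        rw [← this]; exact hs.1.le
      · exfalso
        have : t = 1/2 := min_eq_right h.le
        rw [this] at hs
        linarith [hs.1, hs.2]
    have h1 : s ^ (-r) ≤ ρ ^ (-(r/2)) := by
      have h2 : s ^ (-r) ≤ (Real.sqrt ρ) ^ (-r) :=
        Real.rpow_le_rpow_of_nonpos (Real.sqrt_pos.2 hρ) hsρ (by linarith)
      have h3 : (Real.sqrt ρ) ^ (-r) = ρ ^ (-(r/2)) := by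
        rw [Real.sqrt_eq_rpow, ← Real.rpow_mul hρ.le]
        congr 1; ring
      rw [h3] at h2; exact h2
    have e1 : s ^ ((d:ℝ) - 2 + 2 - 4*r) = s ^ ((d:ℝ) - 3*r) * s ^ (-r) := by
      rw [← Real.rpow_add hs0]
      congr 1; ring
    rw [e1]
    calc s ^ ((d:ℝ) - 3*r) * s ^ (-r) ≤ s ^ ((d:ℝ) - 3*r) * ρ ^ (-(r/2)) :=
          mul_le_mul_of_nonneg_left h1 (Real.rpow_nonneg hs0.le _)
      _ = ρ ^ (-(r/2)) * s ^ ((d:ℝ) - 3*r) := mul_comm _ _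
  -- apply key to both integrals
  have hkey1 := key r ((d:ℝ) - 2) ρ hr (by linarith) hρ hρ1
  have hkey2 := key r ((d:ℝ) + r - 2) ρ hr (by linarith) hρ hρ1
  have he2 : (d:ℝ) + r - 2 + 2 - 4*r = (d:ℝ) - 3*r := by ring
  rw [he2] at hkey2
  have he3 : 1 - 2*r + ((d:ℝ) + r - 2 + 1)/2 = E := by rw [hE_def]; ring
  rw [he3] at hkey2
  -- bound the pieces
  have hρE : (0:ℝ) ≤ ρ ^ E := Real.rpow_nonneg hρ.le _
  have hρr : (0:ℝ) ≤ ρ ^ r := Real.rpow_nonneg hρ.le _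
  have hhalf : ρ ^ (r/2) ≤ 1 := Real.rpow_le_one hρ.le (by linarith) (by linarith)
  have hbound1 : ρ ^ r * (∫ s in Ioc (0:ℝ) (1/2), s ^ ((d:ℝ) - 2) * (ρ + s ^ 2) ^ (1 - 2 * r))
      ≤ ρ ^ E + K := by
    have step1 : ρ ^ r * (∫ s in Ioc (0:ℝ) (1/2), s ^ ((d:ℝ) - 2) * (ρ + s ^ 2) ^ (1 - 2 * r))
        ≤ ρ ^ r * (ρ ^ (1 - 2*r + ((d:ℝ) - 2 + 1)/2) / ((d:ℝ) - 2 + 1)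
            + ρ ^ (-(r/2)) * K) := by
      apply mul_le_mul_of_nonneg_left _ hρr
      exact hkey1.trans (add_le_add_right htail _)
    have q1 : ρ ^ r * ρ ^ (1 - 2*r + ((d:ℝ) - 2 + 1)/2) = ρ ^ E * ρ ^ (r/2) := by
      rw [← Real.rpow_add hρ, ← Real.rpow_add hρ]
      congr 1; rw [hE_def]; ring
    have q2 : ρ ^ r * ρ ^ (-(r/2)) = ρ ^ (r/2) := by
      rw [← Real.rpow_add hρ]
      congr 1; ring
    have e4 : ρ ^ r * (ρ ^ (1 - 2*r + ((d:ℝ) - 2 + 1)/2) / ((d:ℝ) - 2 + 1)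
          + ρ ^ (-(r/2)) * K)
        = (ρ ^ E * ρ ^ (r/2)) / ((d:ℝ) - 1) + ρ ^ (r/2) * K := by
      calc ρ ^ r * (ρ ^ (1 - 2*r + ((d:ℝ) - 2 + 1)/2) / ((d:ℝ) - 2 + 1)
            + ρ ^ (-(r/2)) * K)
          = (ρ ^ r * ρ ^ (1 - 2*r + ((d:ℝ) - 2 + 1)/2)) / ((d:ℝ) - 1)
            + (ρ ^ r * ρ ^ (-(r/2))) * K := by ring
        _ = (ρ ^ E * ρ ^ (r/2)) / ((d:ℝ) - 1) + ρ ^ (r/2) * K := by rw [q1, q2]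
    have step2 : (ρ ^ E * ρ ^ (r/2)) / ((d:ℝ) - 1) + ρ ^ (r/2) * K ≤ ρ ^ E + K := by
      have h5 : (ρ ^ E * ρ ^ (r/2)) / ((d:ℝ) - 1) ≤ ρ ^ E := by
        have : ρ ^ E * ρ ^ (r/2) ≤ ρ ^ E * 1 :=
          mul_le_mul_of_nonneg_left hhalf hρE
        calc (ρ ^ E * ρ ^ (r/2)) / ((d:ℝ) - 1) ≤ (ρ ^ E * ρ ^ (r/2)) / 1 := by
              apply div_le_div_of_nonneg_left _ one_pos (by linarith)
              · positivity
          _ = ρ ^ E * ρ ^ (r/2) := div_one _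
          _ ≤ ρ ^ E := by linarith
      have h6 : ρ ^ (r/2) * K ≤ K := by
        calc ρ ^ (r/2) * K ≤ 1 * K := mul_le_mul_of_nonneg_right hhalf hKnonneg
          _ = K := one_mul _
      linarith
    exact (step1.trans e4.le).trans step2
  have hbound2 : (∫ s in Ioc (0:ℝ) (1/2), s ^ ((d:ℝ) + r - 2) * (ρ + s ^ 2) ^ (1 - 2 * r))
      ≤ ρ ^ E + K := by
    apply hkey2.trans
    apply add_le_add _ le_rfl
    calc ρ ^ E / ((d:ℝ) + r - 2 + 1) ≤ ρ ^ E / 1 := by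
          apply div_le_div_of_nonneg_left hρE one_pos (by linarith)
      _ = ρ ^ E := div_one _
  calc ρ ^ r * (∫ s in Ioc (0:ℝ) (1/2), s ^ ((d:ℝ) - 2) * (ρ + s ^ 2) ^ (1 - 2 * r))
      + (∫ s in Ioc (0:ℝ) (1/2), s ^ ((d:ℝ) + r - 2) * (ρ + s ^ 2) ^ (1 - 2 * r))
      ≤ (ρ ^ E + K) + (ρ ^ E + K) := add_le_add hbound1 hbound2
    _ = 2 * ρ ^ E + 2 * K := by ring

end Stmt12Aux

/-- **Radial integral evaluation** underlying the weighted `L^r` bound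
`‖|x|∇²w‖_{L^r}` for the parabolic cut-off function: for `0 < ρ ≤ 1/2`, the quantity
`ρ^r ∫₀^{1/2} s^{d−2}(ρ+s²)^{1−2r} ds + ∫₀^{1/2} s^{d+r−2}(ρ+s²)^{1−2r} ds` is bounded by
`C ρ^{(d+1)/2−(3/2)r}` if `r > (d+1)/3`, by `C(1+|log ρ|)` if `r = (d+1)/3`, and by `C`
if `r < (d+1)/3`, with `C = C(d,r)`. -/
theorem stmt_12 (d : ℕ) (hd : 2 ≤ d) (r : ℝ) (hr : 1 ≤ r) :
    ∃ C : ℝ, 0 < C ∧ ∀ ρ : ℝ, 0 < ρ → ρ ≤ 1 / 2 →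
      ((((d : ℝ) + 1) / 3 < r →
        ρ ^ r * (∫ s in Ioc (0 : ℝ) (1 / 2), s ^ (d - 2) * (ρ + s ^ 2) ^ (1 - 2 * r))
          + (∫ s in Ioc (0 : ℝ) (1 / 2), s ^ ((d : ℝ) + r - 2) * (ρ + s ^ 2) ^ (1 - 2 * r))
          ≤ C * ρ ^ (((d : ℝ) + 1) / 2 - 3 / 2 * r)) ∧
      (r = ((d : ℝ) + 1) / 3 →
        ρ ^ r * (∫ s in Ioc (0 : ℝ) (1 / 2), s ^ (d - 2) * (ρ + s ^ 2) ^ (1 - 2 * r))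
          + (∫ s in Ioc (0 : ℝ) (1 / 2), s ^ ((d : ℝ) + r - 2) * (ρ + s ^ 2) ^ (1 - 2 * r))
          ≤ C * (1 + |Real.log ρ|)) ∧
      (r < ((d : ℝ) + 1) / 3 →
        ρ ^ r * (∫ s in Ioc (0 : ℝ) (1 / 2), s ^ (d - 2) * (ρ + s ^ 2) ^ (1 - 2 * r))
          + (∫ s in Ioc (0 : ℝ) (1 / 2), s ^ ((d : ℝ) + r - 2) * (ρ + s ^ 2) ^ (1 - 2 * r))
          ≤ C)) := by
  have hd2 : (2:ℝ) ≤ (d:ℝ) := by exact_mod_cast hd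
  set a : ℝ := (d:ℝ) - 3*r with ha_def
  -- generic facts about t and K, as functions of ρ
  have hK : ∀ ρ : ℝ, 0 < ρ → ρ ≤ 1/2 →
      (0 < min (Real.sqrt ρ) (1/2) ∧ min (Real.sqrt ρ) (1/2) ≤ 1/2 ∧
        Real.sqrt ρ / 2 ≤ min (Real.sqrt ρ) (1/2)) := by
    intro ρ hρ hρ1
    refine ⟨lt_min (Real.sqrt_pos.2 hρ) (by norm_num), min_le_right _ _, ?_⟩
    have h1 : Real.sqrt ρ ≤ 1 := by
      rw [show (1:ℝ) = Real.sqrt 1 by simp]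
      exact Real.sqrt_le_sqrt (by linarith)
    have h0 : 0 ≤ Real.sqrt ρ := Real.sqrt_nonneg ρ
    exact le_min (by linarith) (by linarith)
  rcases lt_trichotomy r (((d:ℝ) + 1)/3) with hc | hc | hc
  · -- subcritical: r < (d+1)/3, so a + 1 > 0
    have ha1 : 0 < a + 1 := by rw [ha_def]; linarith
    refine ⟨2 + 2/(a+1), by positivity, ?_⟩
    intro ρ hρ hρ1
    refine ⟨fun h => absurd h (by linarith), fun h => absurd h (by linarith), fun _ => ?_⟩
    obtain ⟨ht0, ht1, htl⟩ := hK ρ hρ hρ1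
    set t := min (Real.sqrt ρ) (1/2)
    have hKval : (∫ s in Ioc t (1/2), s ^ a)
        = ((1/2:ℝ) ^ (a+1) - t ^ (a+1))/(a+1) := by
      rw [← intervalIntegral.integral_of_le ht1,
        integral_rpow (Or.inl (by linarith : (-1:ℝ) < a))]
    have hKle : (∫ s in Ioc t (1/2), s ^ a) ≤ 1/(a+1) := by
      rw [hKval]
      have h1 : ((1/2:ℝ)) ^ (a+1) ≤ 1 := Real.rpow_le_one (by norm_num) (by norm_num) ha1.le
      have h2 : (0:ℝ) ≤ t ^ (a+1) := Real.rpow_nonneg ht0.le _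
      apply div_le_div_of_nonneg_right _ ha1.le
      linarith
    have hm := Stmt12Aux.master d hd r hr ρ hρ hρ1
    have hρE : ρ ^ (((d:ℝ) + 1)/2 - 3/2*r) ≤ 1 :=
      Real.rpow_le_one hρ.le (by linarith) (by rw [ha_def] at ha1; linarith)
    calc ρ ^ r * (∫ s in Ioc (0:ℝ) (1/2), s ^ (d - 2) * (ρ + s ^ 2) ^ (1 - 2 * r))
        + (∫ s in Ioc (0:ℝ) (1/2), s ^ ((d:ℝ) + r - 2) * (ρ + s ^ 2) ^ (1 - 2 * r))
        ≤ 2 * ρ ^ (((d:ℝ) + 1)/2 - 3/2*r)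
          + 2 * ∫ s in Ioc t (1/2), s ^ a := hm
      _ ≤ 2 * 1 + 2 * (1/(a+1)) := by
          apply add_le_add
          · linarith
          · linarith [hKle]
      _ = 2 + 2/(a+1) := by ring
  · -- critical: r = (d+1)/3, a = -1
    have ha1 : a = -1 := by rw [ha_def, hc]; ring
    refine ⟨2, by norm_num, ?_⟩
    intro ρ hρ hρ1
    refine ⟨fun h => absurd h (by linarith), fun _ => ?_, fun h => absurd h (by linarith)⟩
    obtain ⟨ht0, ht1, htl⟩ := hK ρ hρ hρ1
    set t := min (Real.sqrt ρ) (1/2)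
    have hE0 : ((d:ℝ) + 1)/2 - 3/2*r = 0 := by rw [hc]; ring
    have hKval : (∫ s in Ioc t (1/2), s ^ a) = Real.log ((1/2)/t) := by
      rw [← intervalIntegral.integral_of_le ht1]
      rw [show (fun s : ℝ => s ^ a) = (fun s : ℝ => s⁻¹) by
        funext s; rw [ha1, Real.rpow_neg_one]]
      exact integral_inv (notMem_uIcc_of_lt ht0 one_half_pos)
    have hKle : (∫ s in Ioc t (1/2), s ^ a) ≤ |Real.log ρ| := by
      rw [hKval]
      have hlogt : Real.log (Real.sqrt ρ / 2) ≤ Real.log t :=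
        Real.log_le_log (by have := Real.sqrt_pos.2 hρ; linarith) htl
      have hls : Real.log (Real.sqrt ρ / 2) = Real.log ρ / 2 - Real.log 2 := by
        rw [Real.log_div (by positivity) (by norm_num), Real.log_sqrt hρ.le]
      have hld : Real.log ((1/2)/t) = Real.log (1/2) - Real.log t :=
        Real.log_div (by norm_num) (ne_of_gt ht0)
      have hl2 : Real.log (1/2 : ℝ) = -Real.log 2 := by
        rw [one_div, Real.log_inv]
      have habs : -Real.log ρ ≤ |Real.log ρ| := neg_le_abs _
      have habs0 : 0 ≤ |Real.log ρ| := abs_nonneg _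
      rw [hld, hl2]
      rw [hls] at hlogt
      linarith
    have hm := Stmt12Aux.master d hd r hr ρ hρ hρ1
    rw [hE0, Real.rpow_zero] at hm
    calc ρ ^ r * (∫ s in Ioc (0:ℝ) (1/2), s ^ (d - 2) * (ρ + s ^ 2) ^ (1 - 2 * r))
        + (∫ s in Ioc (0:ℝ) (1/2), s ^ ((d:ℝ) + r - 2) * (ρ + s ^ 2) ^ (1 - 2 * r))
        ≤ 2 * 1 + 2 * ∫ s in Ioc t (1/2), s ^ a := hm
      _ ≤ 2 * 1 + 2 * |Real.log ρ| := by linarith [hKle]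
      _ = 2 * (1 + |Real.log ρ|) := by ring
  · -- supercritical: r > (d+1)/3, a + 1 < 0
    have ha1 : a + 1 < 0 := by rw [ha_def]; linarith
    set c2 : ℝ := (2:ℝ) ^ (-(a+1)) with hc2_def
    have hc2pos : 0 < c2 := Real.rpow_pos_of_pos (by norm_num) _
    have hdivpos : 0 < c2 / (-(a+1)) := div_pos hc2pos (by linarith)
    refine ⟨2 + 2 * (c2 / (-(a+1))), by linarith, ?_⟩
    intro ρ hρ hρ1
    refine ⟨fun _ => ?_, fun h => absurd h (by linarith), fun h => absurd h (by linarith)⟩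
    obtain ⟨ht0, ht1, htl⟩ := hK ρ hρ hρ1
    set t := min (Real.sqrt ρ) (1/2)
    have hE : ((d:ℝ) + 1)/2 - 3/2*r = (a+1)/2 := by rw [ha_def]; ring
    have hKval : (∫ s in Ioc t (1/2), s ^ a)
        = ((1/2:ℝ) ^ (a+1) - t ^ (a+1))/(a+1) := by
      rw [← intervalIntegral.integral_of_le ht1,
        integral_rpow (Or.inr ⟨by intro h; rw [h] at ha1; norm_num at ha1,
          notMem_uIcc_of_lt ht0 one_half_pos⟩)]
    have hKle : (∫ s in Ioc t (1/2), s ^ a)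
        ≤ (c2/(-(a+1))) * ρ ^ ((a+1)/2) := by
      rw [hKval]
      have e1 : ((1/2:ℝ) ^ (a+1) - t ^ (a+1))/(a+1)
          = (t ^ (a+1) - (1/2:ℝ) ^ (a+1))/(-(a+1)) := by
        rw [div_neg, ← neg_div, neg_sub]
      rw [e1]
      have h1 : (0:ℝ) ≤ (1/2:ℝ) ^ (a+1) := Real.rpow_nonneg (by norm_num) _
      have h2 : t ^ (a+1) ≤ (Real.sqrt ρ / 2) ^ (a+1) :=
        Real.rpow_le_rpow_of_nonpos (by positivity) htl (by linarith)
      have h3 : (Real.sqrt ρ / 2) ^ (a+1) = ρ ^ ((a+1)/2) * c2 := by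
        rw [Real.div_rpow (Real.sqrt_nonneg ρ) (by norm_num),
          Real.sqrt_eq_rpow, ← Real.rpow_mul hρ.le, hc2_def,
          Real.rpow_neg (by norm_num : (0:ℝ) ≤ 2), div_eq_mul_inv]
        congr 1; ring
      have hna : 0 < -(a+1) := by linarith
      calc (t ^ (a+1) - (1/2:ℝ) ^ (a+1))/(-(a+1)) ≤ t ^ (a+1) / (-(a+1)) := by
            apply div_le_div_of_nonneg_right _ hna.le
            linarith
        _ ≤ (ρ ^ ((a+1)/2) * c2) / (-(a+1)) := by
            apply div_le_div_of_nonneg_right _ hna.le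
            rw [← h3]; exact h2
        _ = (c2/(-(a+1))) * ρ ^ ((a+1)/2) := by ring
    have hm := Stmt12Aux.master d hd r hr ρ hρ hρ1
    rw [hE] at hm ⊢
    have hρE : (0:ℝ) ≤ ρ ^ ((a+1)/2) := Real.rpow_nonneg hρ.le _
    calc ρ ^ r * (∫ s in Ioc (0:ℝ) (1/2), s ^ (d - 2) * (ρ + s ^ 2) ^ (1 - 2 * r))
        + (∫ s in Ioc (0:ℝ) (1/2), s ^ ((d:ℝ) + r - 2) * (ρ + s ^ 2) ^ (1 - 2 * r))
        ≤ 2 * ρ ^ ((a+1)/2) + 2 * ∫ s in Ioc t (1/2), s ^ a := hm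
      _ ≤ 2 * ρ ^ ((a+1)/2) + 2 * ((c2/(-(a+1))) * ρ ^ ((a+1)/2)) := by
          linarith [hKle]
      _ = (2 + 2 * (c2 / (-(a+1)))) * ρ ^ ((a+1)/2) := by ring
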